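/- For every nonzero integer t, √5 · artanh(((1 - t + 2t²)/(1 - t + 3t² - 2t³ + 4t⁴)) · t√5) = (5/(2²⁰ t³⁹)) · ∑_{k=0}^∞ (1/(2²⁰ t⁴⁰)^k) · ∑_{j=1}^{40} a_j/(40k + j), where (a₁,...,a₄₀) = (2¹⁹t³⁸, 0, 2¹⁸t³⁶, 2¹⁸t³⁵, 0, 0, -2¹⁶t³², 2¹⁶t³¹, 2¹⁵t³⁰, 0, -2¹⁴t²⁸, -2¹⁴t²⁷, 2¹³t²⁶, 0, 0, -2¹²t²³, -2¹¹t²², 0, -2¹⁰t²⁰, 0, -2⁹t¹⁸, 0, -2⁸t¹⁶, -2⁸t¹⁵, 0, 0, 2⁶t¹², -2⁶t¹¹, -2⁵t¹⁰, 0, 2⁴t⁸, 2⁴t⁷, -2³t⁶, 0, 0, 2²t³, 2t², 0, 1, 0). -/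

import Mathlib

open MeasureTheory

/-- The real inverse hyperbolic tangent: artanh x = (1/2) log ((1+x)/(1-x)). -/
noncomputable def Real.artanhLog (x : ℝ) : ℝ := (1 / 2) * Real.log ((1 + x) / (1 - x))

/-- The coefficient vector (a₁, ..., a₄₀) of the BBP-type formula, as a function of `t`,
indexed by `j ∈ Fin 40` (so `bbpCoeff t j` corresponds to `a_{j+1}`). -/
def bbpCoeff (t : ℝ) : Fin 40 → ℝ :=
  ![2 ^ 19 * t ^ 38, 0, 2 ^ 18 * t ^ 36, 2 ^ 18 * t ^ 35, 0, 0, -(2 ^ 16) * t ^ 32,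
    2 ^ 16 * t ^ 31, 2 ^ 15 * t ^ 30, 0, -(2 ^ 14) * t ^ 28, -(2 ^ 14) * t ^ 27,
    2 ^ 13 * t ^ 26, 0, 0, -(2 ^ 12) * t ^ 23, -(2 ^ 11) * t ^ 22, 0, -(2 ^ 10) * t ^ 20, 0,
    -(2 ^ 9) * t ^ 18, 0, -(2 ^ 8) * t ^ 16, -(2 ^ 8) * t ^ 15, 0, 0, 2 ^ 6 * t ^ 12,
    -(2 ^ 6) * t ^ 11, -(2 ^ 5) * t ^ 10, 0, 2 ^ 4 * t ^ 8, 2 ^ 4 * t ^ 7, -(2 ^ 3) * t ^ 6,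
    0, 0, 2 ^ 2 * t ^ 3, 2 * t ^ 2, 0, 1, 0]

/-! ### Auxiliary machinery for the BBP proof -/

def pA (x y : ℝ) : ℝ := ∑ j : Fin 40, bbpCoeff x j * y ^ (j : ℕ)

lemma pA_eq (x y : ℝ) : pA x y =
    2^19*x^38 + 2^18*x^36*y^2 + 2^18*x^35*y^3 - 2^16*x^32*y^6 + 2^16*x^31*y^7
    + 2^15*x^30*y^8 - 2^14*x^28*y^10 - 2^14*x^27*y^11 + 2^13*x^26*y^12
    - 2^12*x^23*y^15 - 2^11*x^22*y^16 - 2^10*x^20*y^18 - 2^9*x^18*y^20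
    - 2^8*x^16*y^22 - 2^8*x^15*y^23 + 2^6*x^12*y^26 - 2^6*x^11*y^27
    - 2^5*x^10*y^28 + 2^4*x^8*y^30 + 2^4*x^7*y^31 - 2^3*x^6*y^32
    + 2^2*x^3*y^35 + 2*x^2*y^36 + x^0*y^38 := by
  simp [pA, bbpCoeff, Fin.sum_univ_succ]
  ring

lemma cont_pA (x : ℝ) : Continuous (pA x) := by
  unfold pA; exact continuous_finset_sum _ fun j _ => continuous_const.mul (continuous_pow _)

lemma key_identity (x y A : ℝ)
    (hA : A = 2^19*x^38 + 2^18*x^36*y^2 + 2^18*x^35*y^3 - 2^16*x^32*y^6 + 2^16*x^31*y^7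
    + 2^15*x^30*y^8 - 2^14*x^28*y^10 - 2^14*x^27*y^11 + 2^13*x^26*y^12
    - 2^12*x^23*y^15 - 2^11*x^22*y^16 - 2^10*x^20*y^18 - 2^9*x^18*y^20
    - 2^8*x^16*y^22 - 2^8*x^15*y^23 + 2^6*x^12*y^26 - 2^6*x^11*y^27
    - 2^5*x^10*y^28 + 2^4*x^8*y^30 + 2^4*x^7*y^31 - 2^3*x^6*y^32
    + 2^2*x^3*y^35 + 2*x^2*y^36 + x^0*y^38) :
    x * A * ((y^4 - x*y^3 + 3*x^2*y^2 - 2*x^3*y + 4*x^4)^2 - 5*(x*y^3 - x^2*y^2 + 2*x^3*y)^2)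
      = ((3*x*y^2 - 2*x^2*y + 2*x^3) * (y^4 - x*y^3 + 3*x^2*y^2 - 2*x^3*y + 4*x^4)
          - (x*y^3 - x^2*y^2 + 2*x^3*y) * (4*y^3 - 3*x*y^2 + 6*x^2*y - 2*x^3))
        * (2^20*x^40 - y^40) := by
  subst hA
  ring

lemma sqrt5_sq : Real.sqrt 5 ^ 2 = 5 := Real.sq_sqrt (by norm_num)

lemma sqrt5_lt : 2 < Real.sqrt 5 ∧ Real.sqrt 5 < 3 := by
  constructor
  · nlinarith [sqrt5_sq, Real.sqrt_nonneg 5]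
  · nlinarith [sqrt5_sq, Real.sqrt_nonneg 5]

lemma pU_pos (x : ℝ) (hx : x ≠ 0) (y : ℝ) :
    0 < y^4 - x*y^3 + 3*x^2*y^2 - 2*x^3*y + 4*x^4
        + Real.sqrt 5 * (x*y^3 - x^2*y^2 + 2*x^3*y) := by
  set s := Real.sqrt 5 with hsdef
  have hs : s^2 = 5 := sqrt5_sq
  have hs2 : 2 < s := sqrt5_lt.1
  have hs3 : s < 3 := sqrt5_lt.2
  have key : y^4 - x*y^3 + 3*x^2*y^2 - 2*x^3*y + 4*x^4 + s * (x*y^3 - x^2*y^2 + 2*x^3*y)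
      = (y^2 + ((s-1)/2)*x*y)^2 + ((3-s)/2)*(x*y + (s+1)*x^2)^2 := by
    linear_combination (s/2*x^4 - x^2*y^2/4 - x^4/2 + x^3*y) * hs
  rw [key]
  rcases eq_or_ne (x*y + (s+1)*x^2) 0 with h | h
  · have hy : y = -((s+1)*x) := by
      have hx2 : x*y = x * (-((s+1)*x)) := by ring_nf; ring_nf at h; linarith
      exact mul_left_cancel₀ hx hx2
    have hb : y^2 + ((s-1)/2)*x*y = (2*s+4)*x^2 := by
      rw [hy]; linear_combination (x^2/2) * hs
    rw [h, hb]
    have : (0:ℝ) < (2*s+4)*x^2 := by positivity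
    nlinarith [this]
  · have h2 : 0 < (x*y + (s+1)*x^2)^2 := pow_two_pos_of_ne_zero h
    have h3 : 0 < (3-s)/2 := by linarith
    nlinarith [sq_nonneg (y^2 + ((s-1)/2)*x*y), mul_pos h3 h2]

lemma pV_pos (x : ℝ) (hx : x ≠ 0) (y : ℝ) :
    0 < y^4 - x*y^3 + 3*x^2*y^2 - 2*x^3*y + 4*x^4
        - Real.sqrt 5 * (x*y^3 - x^2*y^2 + 2*x^3*y) := by
  set s := Real.sqrt 5 with hsdef
  have hs : s^2 = 5 := sqrt5_sq
  have hs2 : 2 < s := sqrt5_lt.1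
  have hs3 : s < 3 := sqrt5_lt.2
  have key : y^4 - x*y^3 + 3*x^2*y^2 - 2*x^3*y + 4*x^4 - s * (x*y^3 - x^2*y^2 + 2*x^3*y)
      = (y^2 - ((s+1)/2)*x*y)^2 + ((3+s)/2)*(x*y + (1-s)*x^2)^2 := by
    linear_combination (-s/2*x^4 - x^2*y^2/4 - x^4/2 + x^3*y) * hs
  rw [key]
  rcases eq_or_ne (x*y + (1-s)*x^2) 0 with h | h
  · have hy : y = -((1-s)*x) := by
      have hx2 : x*y = x * (-((1-s)*x)) := by ring_nf; ring_nf at h; linarith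
      exact mul_left_cancel₀ hx hx2
    have hb : y^2 - ((s+1)/2)*x*y = (4-2*s)*x^2 := by
      rw [hy]; linear_combination (x^2/2) * hs
    rw [h, hb]
    have hne : (4-2*s)*x^2 ≠ 0 := by
      have h4 : 4-2*s ≠ 0 := by intro hc; nlinarith
      positivity
    have : 0 < ((4-2*s)*x^2)^2 := pow_two_pos_of_ne_zero hne
    nlinarith [this]
  · have h2 : 0 < (x*y + (1-s)*x^2)^2 := pow_two_pos_of_ne_zero h
    have h3 : 0 < (3+s)/2 := by linarith
    nlinarith [sq_nonneg (y^2 - ((s+1)/2)*x*y), mul_pos h3 h2]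

lemma step_A (x : ℝ) (k : ℕ) :
    ∫ y in (0:ℝ)..1, pA x y * y ^ (40*k)
      = ∑ j : Fin 40, bbpCoeff x j / (40 * (k:ℝ) + (j:ℕ) + 1) := by
  have h1 : ∀ y : ℝ, pA x y * y ^ (40*k)
      = ∑ j : Fin 40, bbpCoeff x j * y ^ ((j:ℕ) + 40*k) := by
    intro y
    rw [pA, Finset.sum_mul]
    exact Finset.sum_congr rfl fun j _ => by rw [pow_add]; ring
  simp only [h1]
  rw [intervalIntegral.integral_finset_sum (f := fun j y => bbpCoeff x j * y ^ ((j:ℕ) + 40*k))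
    (fun j _ => (continuous_const.mul (continuous_pow _)).intervalIntegrable 0 1)]
  refine Finset.sum_congr rfl fun j _ => ?_
  rw [intervalIntegral.integral_const_mul, integral_pow]
  push_cast
  rw [div_eq_mul_inv, one_pow, zero_pow (by omega)]
  ring_nf

lemma swap_lemma (A : ℝ → ℝ) (hA : Continuous A) (b : ℝ) (hb0 : 0 < b) (hb1 : b < 1) :
    ∑' k : ℕ, b ^ k * ∫ y in (0:ℝ)..1, A y * y ^ (40*k)
      = ∫ y in (0:ℝ)..1, A y / (1 - b * y ^ 40) := by
  have h01 : (0:ℝ) ≤ 1 := zero_le_one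
  have hms : MeasurableSet (Set.Ioc (0:ℝ) 1) := measurableSet_Ioc
  set F : ℕ → ℝ → ℝ := fun k y => b ^ k * (A y * y ^ (40*k)) with hF
  have hFc : ∀ k, Continuous (F k) :=
    fun k => continuous_const.mul (hA.mul (continuous_pow _))
  have hFint : ∀ k, Integrable (F k) (volume.restrict (Set.Ioc (0:ℝ) 1)) :=
    fun k => (hFc k).integrableOn_Ioc
  have habs : Integrable (fun y => |A y|) (volume.restrict (Set.Ioc (0:ℝ) 1)) :=
    hA.abs.integrableOn_Ioc
  have hbound : ∀ k, (∫ y in Set.Ioc (0:ℝ) 1, ‖F k y‖)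
      ≤ b ^ k * ∫ y in Set.Ioc (0:ℝ) 1, |A y| := by
    intro k
    rw [← integral_const_mul]
    refine setIntegral_mono_on ((hFint k).norm) (habs.const_mul _) hms ?_
    intro y hy
    have hy0 : 0 ≤ y := le_of_lt hy.1
    have hy1 : y ≤ 1 := hy.2
    have heq : ‖F k y‖ = b ^ k * (|A y| * y ^ (40*k)) := by
      show |b ^ k * (A y * y ^ (40*k))| = _
      rw [abs_mul, abs_mul, abs_pow, abs_pow, abs_of_nonneg (le_of_lt hb0),
        abs_of_nonneg hy0]
    rw [heq]
    have h1 : y ^ (40*k) ≤ 1 := pow_le_one₀ hy0 hy1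
    have h2 : |A y| * y ^ (40*k) ≤ |A y| * 1 :=
      mul_le_mul_of_nonneg_left h1 (abs_nonneg _)
    rw [mul_one] at h2
    exact mul_le_mul_of_nonneg_left h2 (pow_nonneg (le_of_lt hb0) k)
  have hsum : Summable fun k => ∫ y in Set.Ioc (0:ℝ) 1, ‖F k y‖ := by
    refine Summable.of_nonneg_of_le (fun k => integral_nonneg fun y => norm_nonneg _)
      hbound ?_
    exact (summable_geometric_of_lt_one (le_of_lt hb0) hb1).mul_right _
  have hHS := hasSum_integral_of_summable_integral_norm hFint hsum
  have hts : ∑' k, ∫ y in Set.Ioc (0:ℝ) 1, F k y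
      = ∫ y in Set.Ioc (0:ℝ) 1, (∑' k, F k y) := hHS.tsum_eq
  have hpt : ∀ y ∈ Set.Ioc (0:ℝ) 1, (∑' k, F k y) = A y / (1 - b * y ^ 40) := by
    intro y hy
    have hy0 : 0 ≤ y := le_of_lt hy.1
    have hr0 : 0 ≤ b * y ^ 40 := mul_nonneg (le_of_lt hb0) (pow_nonneg hy0 _)
    have hr1 : b * y ^ 40 < 1 :=
      lt_of_le_of_lt (by nlinarith [pow_le_one₀ hy0 hy.2 (n := 40)]) hb1
    have h1 : ∀ k : ℕ, F k y = A y * (b * y ^ 40) ^ k := by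
      intro k
      show b ^ k * (A y * y ^ (40*k)) = A y * (b * y ^ 40) ^ k
      rw [mul_pow, ← pow_mul]
      ring
    simp only [h1]
    rw [tsum_mul_left, tsum_geometric_of_lt_one hr0 hr1, div_eq_mul_inv]
  calc ∑' k : ℕ, b ^ k * ∫ y in (0:ℝ)..1, A y * y ^ (40*k)
      = ∑' k, ∫ y in Set.Ioc (0:ℝ) 1, F k y := by
        refine tsum_congr fun k => ?_
        rw [intervalIntegral.integral_of_le h01, ← integral_const_mul]
    _ = ∫ y in Set.Ioc (0:ℝ) 1, (∑' k, F k y) := hts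
    _ = ∫ y in Set.Ioc (0:ℝ) 1, A y / (1 - b * y ^ 40) := setIntegral_congr_fun hms hpt
    _ = ∫ y in (0:ℝ)..1, A y / (1 - b * y ^ 40) := by
        rw [intervalIntegral.integral_of_le h01]

theorem bbp_formula_family (t : ℤ) (ht : t ≠ 0) :
    Real.sqrt 5 *
        Real.artanhLog (((1 - (t : ℝ) + 2 * (t : ℝ) ^ 2) /
            (1 - (t : ℝ) + 3 * (t : ℝ) ^ 2 - 2 * (t : ℝ) ^ 3 + 4 * (t : ℝ) ^ 4)) *
          ((t : ℝ) * Real.sqrt 5))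
      = (5 / (2 ^ 20 * (t : ℝ) ^ 39)) *
          ∑' k : ℕ, (1 / (2 ^ 20 * (t : ℝ) ^ 40)) ^ k *
            ∑ j : Fin 40, bbpCoeff (t : ℝ) j / (40 * k + (j : ℕ) + 1) := by
  set x : ℝ := (t : ℝ) with hxdef
  have hx : x ≠ 0 := Int.cast_ne_zero.mpr ht
  have hx2 : (1:ℝ) ≤ x^2 := by
    rw [hxdef]
    have h1 : (1:ℤ) ≤ t^2 := by
      rcases lt_or_gt_of_ne ht with h | h <;> nlinarith
    exact_mod_cast h1
  have hx40 : (1:ℝ) ≤ x^40 := by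
    calc (1:ℝ) = 1^20 := by norm_num
    _ ≤ (x^2)^20 := pow_le_pow_left₀ (by norm_num) hx2 20
    _ = x^40 := by rw [← pow_mul]
  have hx40pos : (0:ℝ) < x^40 := lt_of_lt_of_le one_pos hx40
  set s := Real.sqrt 5 with hsdef
  have hs : s^2 = 5 := sqrt5_sq
  have hs2 : 2 < s := sqrt5_lt.1
  set b : ℝ := 1/(2^20 * x^40) with hbdef
  have hb0 : 0 < b := by rw [hbdef]; positivity
  have hb1 : b < 1 := by
    rw [hbdef, div_lt_one (by positivity)]
    nlinarith [hx40]
  -- Step 1 : the sum equals an integral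
  have hstep1 : (∑' k : ℕ, b ^ k * ∑ j : Fin 40, bbpCoeff x j / (40 * (k:ℝ) + (j:ℕ) + 1))
      = ∫ y in (0:ℝ)..1, pA x y / (1 - b * y ^ 40) := by
    rw [← swap_lemma (pA x) (cont_pA x) b hb0 hb1]
    exact tsum_congr fun k => by rw [step_A]
  -- Step 2 : fold constants into the integrand
  have hRpos : ∀ y ∈ Set.Icc (0:ℝ) 1, (0:ℝ) < 2^20*x^40 - y^40 := by
    intro y hy
    have h1 : y^40 ≤ 1 := pow_le_one₀ hy.1 hy.2
    nlinarith [hx40]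
  have hstep2 : (5 / (2^20 * x^39)) * ∫ y in (0:ℝ)..1, pA x y / (1 - b * y ^ 40)
      = ∫ y in (0:ℝ)..1, 5*x*pA x y/(2^20*x^40 - y^40) := by
    rw [← intervalIntegral.integral_const_mul]
    refine intervalIntegral.integral_congr fun y hy => ?_
    rw [Set.uIcc_of_le zero_le_one] at hy
    have hR := hRpos y hy
    have h1b : (2:ℝ)^20 * x^40 ≠ 0 := by positivity
    rw [hbdef]
    field_simp
  -- Step 3 : FTC
  set h : ℝ → ℝ := fun z => s/2 *
      (Real.log (z^4 - x*z^3 + 3*x^2*z^2 - 2*x^3*z + 4*x^4 + s*(x*z^3 - x^2*z^2 + 2*x^3*z))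
        - Real.log (z^4 - x*z^3 + 3*x^2*z^2 - 2*x^3*z + 4*x^4 - s*(x*z^3 - x^2*z^2 + 2*x^3*z)))
    with hhdef
  have hderiv : ∀ y ∈ Set.uIcc (0:ℝ) 1,
      HasDerivAt h (5*x*pA x y/(2^20*x^40 - y^40)) y := by
    intro y hy
    rw [Set.uIcc_of_le zero_le_one] at hy
    have hR := hRpos y hy
    have hUp : 0 < y^4 - x*y^3 + 3*x^2*y^2 - 2*x^3*y + 4*x^4
        + s*(x*y^3 - x^2*y^2 + 2*x^3*y) := pU_pos x hx y
    have hVp : 0 < y^4 - x*y^3 + 3*x^2*y^2 - 2*x^3*y + 4*x^4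
        - s*(x*y^3 - x^2*y^2 + 2*x^3*y) := pV_pos x hx y
    have h4 : HasDerivAt (fun z:ℝ => z^4) (4*y^3) y := by
      simpa using hasDerivAt_pow 4 y
    have h3 : HasDerivAt (fun z:ℝ => z^3) (3*y^2) y := by
      simpa using hasDerivAt_pow 3 y
    have h2d : HasDerivAt (fun z:ℝ => z^2) (2*y) y := by
      simpa using hasDerivAt_pow 2 y
    have h1d : HasDerivAt (fun z:ℝ => z) 1 y := hasDerivAt_id' y
    have hQd : HasDerivAt (fun z:ℝ => z^4 - x*z^3 + 3*x^2*z^2 - 2*x^3*z + 4*x^4)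
        (4*y^3 - 3*x*y^2 + 6*x^2*y - 2*x^3) y := by
      have := (((h4.sub (h3.const_mul x)).add (h2d.const_mul (3*x^2))).sub
        (h1d.const_mul (2*x^3))).add_const (4*x^4)
      exact this.congr_deriv (by ring)
    have hPd : HasDerivAt (fun z:ℝ => x*z^3 - x^2*z^2 + 2*x^3*z)
        (3*x*y^2 - 2*x^2*y + 2*x^3) y := by
      have := ((h3.const_mul x).sub (h2d.const_mul (x^2))).add (h1d.const_mul (2*x^3))
      exact this.congr_deriv (by ring)
    have hUd := hQd.add (hPd.const_mul s)
    have hVd := hQd.sub (hPd.const_mul s)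
    have hlU := hUd.log hUp.ne'
    have hlV := hVd.log hVp.ne'
    have hd := (hlU.sub hlV).const_mul (s/2)
    have hkey := key_identity x y (pA x y) (pA_eq x y)
    have hval : s/2 * ((4*y^3 - 3*x*y^2 + 6*x^2*y - 2*x^3 + s*(3*x*y^2 - 2*x^2*y + 2*x^3))
          / (y^4 - x*y^3 + 3*x^2*y^2 - 2*x^3*y + 4*x^4 + s*(x*y^3 - x^2*y^2 + 2*x^3*y))
        - (4*y^3 - 3*x*y^2 + 6*x^2*y - 2*x^3 - s*(3*x*y^2 - 2*x^2*y + 2*x^3))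
          / (y^4 - x*y^3 + 3*x^2*y^2 - 2*x^3*y + 4*x^4 - s*(x*y^3 - x^2*y^2 + 2*x^3*y)))
        = 5*x*pA x y/(2^20*x^40 - y^40) := by
      rw [div_sub_div _ _ hUp.ne' hVp.ne', mul_div_assoc',
        div_eq_div_iff (mul_pos hUp hVp).ne' hR.ne']
      linear_combination ((3*x*y^2 - 2*x^2*y + 2*x^3)
            * (y^4 - x*y^3 + 3*x^2*y^2 - 2*x^3*y + 4*x^4)
          - (x*y^3 - x^2*y^2 + 2*x^3*y) * (4*y^3 - 3*x*y^2 + 6*x^2*y - 2*x^3))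
          * (2^20*x^40 - y^40) * hs
        + (5*x*pA x y*(x*y^3 - x^2*y^2 + 2*x^3*y)^2) * hs + (-5) * hkey
    rw [hhdef]
    exact hval ▸ hd
  have hgint : IntervalIntegrable (fun y => 5*x*pA x y/(2^20*x^40 - y^40)) volume 0 1 := by
    apply ContinuousOn.intervalIntegrable
    rw [Set.uIcc_of_le zero_le_one]
    exact ((continuous_const.mul (cont_pA x)).continuousOn).div
      ((continuous_const.sub (continuous_pow 40)).continuousOn)
      (fun y hy => (hRpos y hy).ne')
  have hFTC := intervalIntegral.integral_eq_sub_of_hasDerivAt hderiv hgint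
  -- Step 4 : endpoints
  have hh0 : h 0 = 0 := by
    rw [hhdef]
    norm_num
  -- put it together
  rw [hstep1, hstep2, hFTC, hh0, sub_zero, hhdef]
  -- final algebraic identity at y = 1
  have hU1 : 0 < (1:ℝ)^4 - x*1^3 + 3*x^2*1^2 - 2*x^3*1 + 4*x^4
      + s*(x*1^3 - x^2*1^2 + 2*x^3*1) := pU_pos x hx 1
  have hV1 : 0 < (1:ℝ)^4 - x*1^3 + 3*x^2*1^2 - 2*x^3*1 + 4*x^4
      - s*(x*1^3 - x^2*1^2 + 2*x^3*1) := pV_pos x hx 1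
  have hD : (0:ℝ) < 1 - x + 3*x^2 - 2*x^3 + 4*x^4 := by nlinarith [hU1, hV1]
  show s * Real.artanhLog ((1 - x + 2*x^2)/(1 - x + 3*x^2 - 2*x^3 + 4*x^4) * (x*s))
      = s/2 * (Real.log ((1:ℝ)^4 - x*1^3 + 3*x^2*1^2 - 2*x^3*1 + 4*x^4
          + s*(x*1^3 - x^2*1^2 + 2*x^3*1))
        - Real.log ((1:ℝ)^4 - x*1^3 + 3*x^2*1^2 - 2*x^3*1 + 4*x^4
          - s*(x*1^3 - x^2*1^2 + 2*x^3*1)))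
  rw [Real.artanhLog, ← Real.log_div hU1.ne' hV1.ne']
  have harg : (1 + (1 - x + 2*x^2)/(1 - x + 3*x^2 - 2*x^3 + 4*x^4) * (x*s))
      / (1 - (1 - x + 2*x^2)/(1 - x + 3*x^2 - 2*x^3 + 4*x^4) * (x*s))
      = ((1:ℝ)^4 - x*1^3 + 3*x^2*1^2 - 2*x^3*1 + 4*x^4 + s*(x*1^3 - x^2*1^2 + 2*x^3*1))
        / ((1:ℝ)^4 - x*1^3 + 3*x^2*1^2 - 2*x^3*1 + 4*x^4
          - s*(x*1^3 - x^2*1^2 + 2*x^3*1)) := by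
    rw [div_eq_div_iff]
    · rw [div_mul_eq_mul_div, one_add_div hD.ne', one_sub_div hD.ne']
      ring
    · have hz : 1 - (1 - x + 2*x^2)/(1 - x + 3*x^2 - 2*x^3 + 4*x^4) * (x*s)
          = ((1:ℝ)^4 - x*1^3 + 3*x^2*1^2 - 2*x^3*1 + 4*x^4
            - s*(x*1^3 - x^2*1^2 + 2*x^3*1)) / (1 - x + 3*x^2 - 2*x^3 + 4*x^4) := by
        rw [div_mul_eq_mul_div, one_sub_div hD.ne']
        ring
      rw [hz]
      exact div_ne_zero hV1.ne' hD.ne'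
    · exact hV1.ne'
  rw [harg]
  ring
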